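/- Suppose S and T are bounded operators on H satisfying the symplectic relations, so that S is boundedly invertible. Then Γ∘(S⁻¹∘T̄)*∘Γ = S⁻¹∘T̄, where T̄ = Γ∘T∘Γ. -/

import Mathlib

noncomputable section

open ContinuousLinearMap Filter
open scoped Topology

/-- `conj ∘ conj = id` as a `RingHomCompTriple`, so that conjugate-linear maps compose. -/
instance : RingHomCompTriple (starRingEnd ℂ) (starRingEnd ℂ) (RingHom.id ℂ) :=
  ⟨RingHom.ext fun z => Complex.conj_conj z⟩

variable {H : Type*} [NormedAddCommGroup H] [InnerProductSpace ℂ H] [CompleteSpace H]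

/-- For a conjugation `Γ` (a conjugate-linear isometric involution) and a bounded operator `X`,
the operator `X̄ = Γ ∘ X ∘ Γ`. -/
def conjOp (Γ : H →ₛₗᵢ[starRingEnd ℂ] H) (X : H →L[ℂ] H) : H →L[ℂ] H :=
  Γ.toContinuousLinearMap.comp (X.comp Γ.toContinuousLinearMap)

/-- The Hilbert space direct sum `H ⊕ H`. -/
abbrev H2 (H : Type*) [NormedAddCommGroup H] [InnerProductSpace ℂ H] : Type _ :=
  WithLp 2 (H × H)

/-- The element `(φ, ψ)` of `H ⊕ H`. -/
def mk2 (φ ψ : H) : H2 H := (WithLp.equiv 2 (H × H)).symm (φ, ψ)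

/-- The inclusion `f ↦ (f, 0)` of `H` into `H ⊕ H`. -/
def inc1 : H →L[ℂ] H2 H :=
  (WithLp.prodContinuousLinearEquiv 2 ℂ H H).symm.toContinuousLinearMap.comp
    (ContinuousLinearMap.inl ℂ H H)

/-- The inclusion `f ↦ (0, f)` of `H` into `H ⊕ H`. -/
def inc2 : H →L[ℂ] H2 H :=
  (WithLp.prodContinuousLinearEquiv 2 ℂ H H).symm.toContinuousLinearMap.comp
    (ContinuousLinearMap.inr ℂ H H)

/-- The projection `(φ, ψ) ↦ φ` of `H ⊕ H` onto the first coordinate. -/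
def proj1 : H2 H →L[ℂ] H :=
  (ContinuousLinearMap.fst ℂ H H).comp
    (WithLp.prodContinuousLinearEquiv 2 ℂ H H).toContinuousLinearMap

/-- The projection `(φ, ψ) ↦ ψ` of `H ⊕ H` onto the second coordinate. -/
def proj2 : H2 H →L[ℂ] H :=
  (ContinuousLinearMap.snd ℂ H H).comp
    (WithLp.prodContinuousLinearEquiv 2 ℂ H H).toContinuousLinearMap

/-- The block `B₁₁ f = P₁ B (f, 0)` of an operator `B` on `H ⊕ H`. -/
def blk11 (B : H2 H →L[ℂ] H2 H) : H →L[ℂ] H := proj1.comp (B.comp inc1)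

/-- The block `B₂₁ f = P₂ B (f, 0)` of an operator `B` on `H ⊕ H`. -/
def blk21 (B : H2 H →L[ℂ] H2 H) : H →L[ℂ] H := proj2.comp (B.comp inc1)

/-- The block `B₁₂ f = P₁ B (0, f)` of an operator `B` on `H ⊕ H`. -/
def blk12 (B : H2 H →L[ℂ] H2 H) : H →L[ℂ] H := proj1.comp (B.comp inc2)

/-- The block `B₂₂ f = P₂ B (0, f)` of an operator `B` on `H ⊕ H`. -/
def blk22 (B : H2 H →L[ℂ] H2 H) : H →L[ℂ] H := proj2.comp (B.comp inc2)

/-- `X` is Hilbert–Schmidt with respect to the Hilbert basis `b`. -/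
def IsHS {E : Type*} [NormedAddCommGroup E] [InnerProductSpace ℂ E] {ι : Type*}
    (b : HilbertBasis ι ℂ E) (X : E →L[ℂ] E) : Prop :=
  Summable fun i => ‖X (b i)‖ ^ 2

/-- The Hilbert–Schmidt norm `‖X‖₂ = (∑ᵢ ‖X eᵢ‖²)^{1/2}` with respect to the Hilbert basis `b`. -/
def hsNorm {E : Type*} [NormedAddCommGroup E] [InnerProductSpace ℂ E] {ι : Type*}
    (b : HilbertBasis ι ℂ E) (X : E →L[ℂ] E) : ℝ :=
  Real.sqrt (∑' i, ‖X (b i)‖ ^ 2)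

/-- The symplectic relations for the pair `(S, T)` relative to the conjugation `Γ`:
`S*S − T*T = 1`, `S̄*T − T̄*S = 0`, `SS* − (TT*)‾ = 1`, `TS* − (ST*)‾ = 0`. -/
def SympRel (Γ : H →ₛₗᵢ[starRingEnd ℂ] H) (S T : H →L[ℂ] H) : Prop :=
  adjoint S ∘L S - adjoint T ∘L T = 1 ∧
  adjoint (conjOp Γ S) ∘L T - adjoint (conjOp Γ T) ∘L S = 0 ∧
  S ∘L adjoint S - conjOp Γ (T ∘L adjoint T) = 1 ∧
  T ∘L adjoint S - conjOp Γ (S ∘L adjoint T) = 0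


section Aux
set_option linter.unusedSectionVars false
set_option linter.unusedVariables false

lemma inner_conj (Γ : H →ₛₗᵢ[starRingEnd ℂ] H) (x y : H) :
    (inner ℂ (Γ x) (Γ y) : ℂ) = inner ℂ y x := by
  rw [inner_eq_sum_norm_sq_div_four, inner_eq_sum_norm_sq_div_four]
  have hI : (RCLike.I : ℂ) = Complex.I := rfl
  have h1 : Γ x + Γ y = Γ (x + y) := (map_add Γ x y).symm
  have h2 : Γ x - Γ y = Γ (x - y) := (map_sub Γ x y).symm
  have h3 : Γ x - Complex.I • Γ y = Γ (x + Complex.I • y) := by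
    rw [map_add, LinearIsometry.map_smulₛₗ, Complex.conj_I, neg_smul, sub_eq_add_neg]
  have h4 : Γ x + Complex.I • Γ y = Γ (x - Complex.I • y) := by
    rw [map_sub, LinearIsometry.map_smulₛₗ, Complex.conj_I, neg_smul, sub_neg_eq_add]
  have h5 : x + Complex.I • y = Complex.I • (y - Complex.I • x) := by
    rw [smul_sub, smul_smul, Complex.I_mul_I, neg_smul, one_smul, sub_neg_eq_add, add_comm]
  have h6 : x - Complex.I • y = -(Complex.I • (y + Complex.I • x)) := by
    rw [smul_add, smul_smul, Complex.I_mul_I, neg_smul, one_smul]; abel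
  rw [hI, h1, h2, h3, h4, Γ.norm_map, Γ.norm_map, Γ.norm_map, Γ.norm_map,
    h5, h6, norm_neg, norm_smul, norm_smul, Complex.norm_I, one_mul, one_mul,
    add_comm x y, norm_sub_rev x y]

lemma conjOp_comp (Γ : H →ₛₗᵢ[starRingEnd ℂ] H) (hΓ : ∀ x, Γ (Γ x) = x)
    (A B : H →L[ℂ] H) : conjOp Γ (A ∘L B) = conjOp Γ A ∘L conjOp Γ B := by
  ext x; simp [conjOp, hΓ]

lemma conjOp_conjOp (Γ : H →ₛₗᵢ[starRingEnd ℂ] H) (hΓ : ∀ x, Γ (Γ x) = x)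
    (A : H →L[ℂ] H) : conjOp Γ (conjOp Γ A) = A := by
  ext x; simp [conjOp, hΓ]

lemma conjOp_one (Γ : H →ₛₗᵢ[starRingEnd ℂ] H) (hΓ : ∀ x, Γ (Γ x) = x) :
    conjOp Γ (1 : H →L[ℂ] H) = 1 := by
  ext x; simp [conjOp, hΓ]

lemma adjoint_conjOp (Γ : H →ₛₗᵢ[starRingEnd ℂ] H) (hΓ : ∀ x, Γ (Γ x) = x)
    (A : H →L[ℂ] H) : adjoint (conjOp Γ A) = conjOp Γ (adjoint A) := by
  symm
  rw [eq_adjoint_iff]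
  intro x y
  show (inner ℂ (Γ (adjoint A (Γ x))) y : ℂ) = inner ℂ x (Γ (A (Γ y)))
  calc (inner ℂ (Γ (adjoint A (Γ x))) y : ℂ)
      = inner ℂ (Γ (adjoint A (Γ x))) (Γ (Γ y)) := by rw [hΓ]
    _ = inner ℂ (Γ y) (adjoint A (Γ x)) := inner_conj Γ _ _
    _ = inner ℂ (A (Γ y)) (Γ x) := adjoint_inner_right A _ _
    _ = inner ℂ (Γ (Γ (A (Γ y)))) (Γ x) := by rw [hΓ]
    _ = inner ℂ x (Γ (A (Γ y))) := inner_conj Γ _ _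

theorem stmt4' (Γ : H →ₛₗᵢ[starRingEnd ℂ] H) (hΓ : ∀ x, Γ (Γ x) = x)
    (S T : H →L[ℂ] H) (h4 : T ∘L adjoint S - conjOp Γ (S ∘L adjoint T) = 0)
    (Sinv : H →L[ℂ] H) (hSinv₁ : Sinv ∘L S = 1) (hSinv₂ : S ∘L Sinv = 1) :
    conjOp Γ (adjoint (Sinv ∘L conjOp Γ T)) = Sinv ∘L conjOp Γ T := by
  have h4' : T ∘L adjoint S = conjOp Γ (S ∘L adjoint T) := sub_eq_zero.mp h4
  have key : S ∘L adjoint T = conjOp Γ T ∘L adjoint (conjOp Γ S) := by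
    have h := congrArg adjoint h4'
    rwa [adjoint_comp, adjoint_adjoint, adjoint_conjOp Γ hΓ, adjoint_comp, adjoint_adjoint,
      conjOp_comp Γ hΓ, ← adjoint_conjOp Γ hΓ] at h
  have hS : adjoint (conjOp Γ S) ∘L adjoint (conjOp Γ Sinv) = 1 := by
    rw [← adjoint_comp, ← conjOp_comp Γ hΓ, hSinv₁, conjOp_one Γ hΓ, one_def, adjoint_id]
  rw [adjoint_comp, conjOp_comp Γ hΓ, adjoint_conjOp Γ hΓ, conjOp_conjOp Γ hΓ,
    ← adjoint_conjOp Γ hΓ]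
  calc adjoint T ∘L adjoint (conjOp Γ Sinv)
      = (Sinv ∘L (S ∘L adjoint T)) ∘L adjoint (conjOp Γ Sinv) := by
        rw [← comp_assoc, hSinv₁, one_def, id_comp]
    _ = (Sinv ∘L conjOp Γ T) ∘L (adjoint (conjOp Γ S) ∘L adjoint (conjOp Γ Sinv)) := by
        rw [key]; rw [comp_assoc, comp_assoc, comp_assoc]
    _ = Sinv ∘L conjOp Γ T := by rw [hS, one_def, comp_id]

end Aux

/-- under the symplectic relations, `Γ ∘ (S⁻¹ T̄)* ∘ Γ = S⁻¹ T̄`. -/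
theorem stmt4 (Γ : H →ₛₗᵢ[starRingEnd ℂ] H) (hΓ : ∀ x, Γ (Γ x) = x)
    (S T : H →L[ℂ] H) (hsymp : SympRel Γ S T)
    (Sinv : H →L[ℂ] H) (hSinv₁ : Sinv ∘L S = 1) (hSinv₂ : S ∘L Sinv = 1) :
    conjOp Γ (adjoint (Sinv ∘L conjOp Γ T)) = Sinv ∘L conjOp Γ T := by
  exact stmt4' Γ hΓ S T hsymp.2.2.2 Sinv hSinv₁ hSinv₂
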